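/- Let a, b be nonzero integers with |a| ≠ |b| and let c be a nonzero element of (1/2)ℤ. Then V_{a,b,c} is 16-dimensional over ℂ, and both images σ^T(V_{a,b,c}) and σ^D(V_{a,b,c}) are 4-dimensional over ℂ. -/

import Mathlib

noncomputable section

open Real

/-- Points of `ℝ³`, written as `(x, y, z)`. -/
abbrev R3 : Type := ℝ × ℝ × ℝ

/-- The space of functions `ℝ³ → ℂ`. -/
abbrev FunSp : Type := R3 → ℂ

/-- `φ_{(a,b,c)}(x,y,z) = exp(2πi(ax+by+cz))`. -/
noncomputable def phi (a b c : ℝ) : FunSp :=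
  fun p => Complex.exp (2 * (Real.pi : ℂ) * Complex.I *
    ((a : ℂ) * (p.1 : ℂ) + (b : ℂ) * (p.2.1 : ℂ) + (c : ℂ) * (p.2.2 : ℂ)))

/-- `τ(x,y,z) = (−y, x, z+1/2)`. -/
def tauMap : R3 → R3 := fun p => (-p.2.1, p.1, p.2.2 + 1/2)

/-- `ρ_x(x,y,z) = (x+1/2, −y, −z)`. -/
def rhoxMap : R3 → R3 := fun p => (p.1 + 1/2, -p.2.1, -p.2.2)

/-- `ρ_y(x,y,z) = (−x, y+1/2, 1−z)`. -/
def rhoyMap : R3 → R3 := fun p => (-p.1, p.2.1 + 1/2, 1 - p.2.2)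

/-- `ρ_z(x,y,z) = (1/2−x, 1/2−y, z+1)`. -/
def rhozMap : R3 → R3 := fun p => (1/2 - p.1, 1/2 - p.2.1, p.2.2 + 1)

/-- The Tetra symmetrization `σ^T f = (1/4)(f + f∘τ + f∘τ∘τ + f∘τ∘τ∘τ)`. -/
noncomputable def sigmaT : FunSp →ₗ[ℂ] FunSp :=
  (4⁻¹ : ℂ) • (LinearMap.id + LinearMap.funLeft ℂ ℂ tauMap
    + LinearMap.funLeft ℂ ℂ (tauMap ∘ tauMap)
    + LinearMap.funLeft ℂ ℂ (tauMap ∘ tauMap ∘ tauMap))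

/-- The Didi symmetrization `σ^D f = (1/4)(f + f∘ρ_x + f∘ρ_y + f∘ρ_z)`. -/
noncomputable def sigmaD : FunSp →ₗ[ℂ] FunSp :=
  (4⁻¹ : ℂ) • (LinearMap.id + LinearMap.funLeft ℂ ℂ rhoxMap
    + LinearMap.funLeft ℂ ℂ rhoyMap + LinearMap.funLeft ℂ ℂ rhozMap)

/-- `V_{a,b,c}`: the ℂ-span of the 16 functions `φ_{(±a,±b,±c)}`, `φ_{(±b,±a,±c)}`. -/
def Vspace (a b c : ℝ) : Submodule ℂ FunSp :=
  Submodule.span ℂ {f | ∃ s₁ s₂ s₃ : ℝ,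
    s₁ ∈ ({1, -1} : Set ℝ) ∧ s₂ ∈ ({1, -1} : Set ℝ) ∧ s₃ ∈ ({1, -1} : Set ℝ) ∧
    (f = phi (s₁ * a) (s₂ * b) (s₃ * c) ∨ f = phi (s₁ * b) (s₂ * a) (s₃ * c))}

end


noncomputable section
open Real

open Complex in
lemma phi_comp_tau (p q r : ℝ) :
    phi p q r ∘ tauMap = Complex.exp ((π:ℂ)*I*r) • phi q (-p) r := by
  funext pt
  simp only [Function.comp_apply, phi, tauMap, Pi.smul_apply, smul_eq_mul, ← Complex.exp_add]
  congr 1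
  push_cast
  ring

open Complex in
lemma phi_comp_rhox (p q r : ℝ) :
    phi p q r ∘ rhoxMap = Complex.exp ((π:ℂ)*I*p) • phi p (-q) (-r) := by
  funext pt
  simp only [Function.comp_apply, phi, rhoxMap, Pi.smul_apply, smul_eq_mul, ← Complex.exp_add]
  congr 1
  push_cast
  ring

open Complex in
lemma phi_comp_rhoy (p q r : ℝ) :
    phi p q r ∘ rhoyMap
      = (Complex.exp ((π:ℂ)*I*q) * Complex.exp (2*(π:ℂ)*I*r)) • phi (-p) q (-r) := by
  funext pt
  simp only [Function.comp_apply, phi, rhoyMap, Pi.smul_apply, smul_eq_mul, mul_assoc,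
    ← Complex.exp_add]
  congr 1
  push_cast
  ring

open Complex in
lemma phi_comp_rhoz (p q r : ℝ) :
    phi p q r ∘ rhozMap
      = (Complex.exp ((π:ℂ)*I*p) * Complex.exp ((π:ℂ)*I*q) * Complex.exp (2*(π:ℂ)*I*r)) •
          phi (-p) (-q) r := by
  funext pt
  simp only [Function.comp_apply, phi, rhozMap, Pi.smul_apply, smul_eq_mul, mul_assoc,
    ← Complex.exp_add]
  congr 1
  push_cast
  ring

open Complex in
lemma sigmaT_phi (p q r : ℝ) :
    sigmaT (phi p q r) = (4⁻¹:ℂ) • (phi p q r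
      + Complex.exp ((π:ℂ)*I*r) • phi q (-p) r
      + Complex.exp ((π:ℂ)*I*r)^2 • phi (-p) (-q) r
      + Complex.exp ((π:ℂ)*I*r)^3 • phi (-q) p r) := by
  have e1 := phi_comp_tau p q r
  have e2 := phi_comp_tau q (-p) r
  have e3 := phi_comp_tau (-p) (-q) r
  simp only [neg_neg] at e2 e3
  have c2 : phi p q r ∘ (tauMap ∘ tauMap) = (phi p q r ∘ tauMap) ∘ tauMap := rfl
  have c3 : phi p q r ∘ (tauMap ∘ tauMap ∘ tauMap)
      = ((phi p q r ∘ tauMap) ∘ tauMap) ∘ tauMap := rfl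
  have sc : ∀ (s : ℂ) (f : FunSp), (s • f) ∘ tauMap = s • (f ∘ tauMap) := fun _ _ => rfl
  have fl : ∀ (g : R3 → R3) (f : FunSp), LinearMap.funLeft ℂ ℂ g f = f ∘ g := fun _ _ => rfl
  simp only [sigmaT, LinearMap.smul_apply, LinearMap.add_apply, LinearMap.id_apply, fl]
  rw [c2, c3, e1, sc, e2, sc, sc, e3]
  match_scalars <;> ring

open Complex in
lemma sigmaD_phi (p q r : ℝ) :
    sigmaD (phi p q r) = (4⁻¹:ℂ) • (phi p q r
      + Complex.exp ((π:ℂ)*I*p) • phi p (-q) (-r)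
      + (Complex.exp ((π:ℂ)*I*q) * Complex.exp (2*(π:ℂ)*I*r)) • phi (-p) q (-r)
      + (Complex.exp ((π:ℂ)*I*p) * Complex.exp ((π:ℂ)*I*q) * Complex.exp (2*(π:ℂ)*I*r)) •
          phi (-p) (-q) r) := by
  have fl : ∀ (g : R3 → R3) (f : FunSp), LinearMap.funLeft ℂ ℂ g f = f ∘ g := fun _ _ => rfl
  simp only [sigmaD, LinearMap.smul_apply, LinearMap.add_apply, LinearMap.id_apply, fl]
  rw [phi_comp_rhox, phi_comp_rhoy, phi_comp_rhoz]

end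


noncomputable section
open Real

open Complex in
lemma exp_eq_one_int (A : ℂ) (k : ℤ) (h : A = k * (2*(π:ℂ)*I)) : Complex.exp A = 1 := by
  rw [h, Complex.exp_int_mul_two_pi_mul_I]

open Complex in
lemma exp_neg_of_sq {x : ℂ} (h : Complex.exp x * Complex.exp x = 1) :
    Complex.exp (-x) = Complex.exp x := by
  rw [Complex.exp_neg]
  exact inv_eq_of_mul_eq_one_left h

open Complex in
lemma masterT1 (p q r : ℝ) (h4 : Complex.exp ((π:ℂ)*I*r)^4 = 1) :
    sigmaT (phi q (-p) r) = Complex.exp ((π:ℂ)*I*r)^3 • sigmaT (phi p q r) := by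
  rw [sigmaT_phi, sigmaT_phi]
  simp only [neg_neg]
  match_scalars <;>
    (first
  | ring1
  | linear_combination ((4:ℂ)⁻¹) * h4
  | linear_combination (-(4:ℂ)⁻¹) * h4
  | linear_combination ((4:ℂ)⁻¹ * Complex.exp ((π:ℂ)*I*r)) * h4
  | linear_combination (-(4:ℂ)⁻¹ * Complex.exp ((π:ℂ)*I*r)) * h4
  | linear_combination ((4:ℂ)⁻¹ * Complex.exp ((π:ℂ)*I*r)^2) * h4
  | linear_combination (-(4:ℂ)⁻¹ * Complex.exp ((π:ℂ)*I*r)^2) * h4)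

open Complex in
lemma masterT2 (p q r : ℝ) (h4 : Complex.exp ((π:ℂ)*I*r)^4 = 1) :
    sigmaT (phi (-p) (-q) r) = Complex.exp ((π:ℂ)*I*r)^2 • sigmaT (phi p q r) := by
  rw [sigmaT_phi, sigmaT_phi]
  simp only [neg_neg]
  match_scalars <;>
    (first
  | ring1
  | linear_combination ((4:ℂ)⁻¹) * h4
  | linear_combination (-(4:ℂ)⁻¹) * h4
  | linear_combination ((4:ℂ)⁻¹ * Complex.exp ((π:ℂ)*I*r)) * h4
  | linear_combination (-(4:ℂ)⁻¹ * Complex.exp ((π:ℂ)*I*r)) * h4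
  | linear_combination ((4:ℂ)⁻¹ * Complex.exp ((π:ℂ)*I*r)^2) * h4
  | linear_combination (-(4:ℂ)⁻¹ * Complex.exp ((π:ℂ)*I*r)^2) * h4)

open Complex in
lemma masterT2' (p q r : ℝ) (h4 : Complex.exp ((π:ℂ)*I*r)^4 = 1) :
    sigmaT (phi (-p) q r) = Complex.exp ((π:ℂ)*I*r)^2 • sigmaT (phi p (-q) r) := by
  have := masterT2 p (-q) r h4
  simpa using this

open Complex in
lemma masterT3 (p q r : ℝ) (h4 : Complex.exp ((π:ℂ)*I*r)^4 = 1) :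
    sigmaT (phi (-q) p r) = Complex.exp ((π:ℂ)*I*r) • sigmaT (phi p q r) := by
  rw [sigmaT_phi, sigmaT_phi]
  simp only [neg_neg]
  match_scalars <;>
    (first
  | ring1
  | linear_combination ((4:ℂ)⁻¹) * h4
  | linear_combination (-(4:ℂ)⁻¹) * h4
  | linear_combination ((4:ℂ)⁻¹ * Complex.exp ((π:ℂ)*I*r)) * h4
  | linear_combination (-(4:ℂ)⁻¹ * Complex.exp ((π:ℂ)*I*r)) * h4
  | linear_combination ((4:ℂ)⁻¹ * Complex.exp ((π:ℂ)*I*r)^2) * h4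
  | linear_combination (-(4:ℂ)⁻¹ * Complex.exp ((π:ℂ)*I*r)^2) * h4)

open Complex in
lemma masterT3' (p q r : ℝ) (h4 : Complex.exp ((π:ℂ)*I*r)^4 = 1) :
    sigmaT (phi q p r) = Complex.exp ((π:ℂ)*I*r) • sigmaT (phi p (-q) r) := by
  have := masterT3 p (-q) r h4
  simpa using this


open Complex in
lemma masterD1 (p q r : ℝ)
    (hA : Complex.exp ((π:ℂ)*I*p) * Complex.exp ((π:ℂ)*I*p) = 1)
    (hB : Complex.exp ((π:ℂ)*I*q) * Complex.exp ((π:ℂ)*I*q) = 1)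
    (hR : Complex.exp (2*(π:ℂ)*I*r) * Complex.exp (2*(π:ℂ)*I*r) = 1) :
    sigmaD (phi p (-q) r) = Complex.exp ((π:ℂ)*I*p) • sigmaD (phi p q (-r)) := by
  rw [sigmaD_phi, sigmaD_phi]
  simp only [neg_neg, Complex.ofReal_neg, mul_neg]
  rw [exp_neg_of_sq hB, exp_neg_of_sq hR]
  rcases mul_self_eq_one_iff.mp hA with h | h <;> rw [h] <;> module

open Complex in
lemma masterD2 (p q r : ℝ)
    (hA : Complex.exp ((π:ℂ)*I*p) * Complex.exp ((π:ℂ)*I*p) = 1)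
    (hB : Complex.exp ((π:ℂ)*I*q) * Complex.exp ((π:ℂ)*I*q) = 1)
    (hR : Complex.exp (2*(π:ℂ)*I*r) * Complex.exp (2*(π:ℂ)*I*r) = 1) :
    sigmaD (phi (-p) q r)
      = (Complex.exp ((π:ℂ)*I*q) * Complex.exp (2*(π:ℂ)*I*r)) • sigmaD (phi p q (-r)) := by
  rw [sigmaD_phi, sigmaD_phi]
  simp only [neg_neg, Complex.ofReal_neg, mul_neg]
  rw [exp_neg_of_sq hA, exp_neg_of_sq hR]
  rcases mul_self_eq_one_iff.mp hB with h | h <;>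
    rcases mul_self_eq_one_iff.mp hR with h' | h' <;> rw [h, h'] <;> module

open Complex in
lemma masterD3 (p q r : ℝ)
    (hA : Complex.exp ((π:ℂ)*I*p) * Complex.exp ((π:ℂ)*I*p) = 1)
    (hB : Complex.exp ((π:ℂ)*I*q) * Complex.exp ((π:ℂ)*I*q) = 1)
    (hR : Complex.exp (2*(π:ℂ)*I*r) * Complex.exp (2*(π:ℂ)*I*r) = 1) :
    sigmaD (phi (-p) (-q) r)
      = (Complex.exp ((π:ℂ)*I*p) * Complex.exp ((π:ℂ)*I*q) * Complex.exp (2*(π:ℂ)*I*r)) •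
          sigmaD (phi p q r) := by
  rw [sigmaD_phi, sigmaD_phi]
  simp only [neg_neg, Complex.ofReal_neg, mul_neg]
  rw [exp_neg_of_sq hA, exp_neg_of_sq hB]
  rcases mul_self_eq_one_iff.mp hA with h | h <;>
    rcases mul_self_eq_one_iff.mp hB with h' | h' <;>
      rcases mul_self_eq_one_iff.mp hR with h'' | h'' <;> rw [h, h', h''] <;> module


open Complex in
lemma phi_add (p q r : ℝ) (v w : R3) :
    phi p q r (v + w) = phi p q r v * phi p q r w := by
  simp only [phi, Prod.fst_add, Prod.snd_add, ← Complex.exp_add]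
  congr 1
  push_cast
  ring

open Complex in
noncomputable def toHom (p q r : ℝ) : Multiplicative R3 →* ℂ where
  toFun := phi p q r
  map_one' := by
    show phi p q r (0, 0, 0) = 1
    simp [phi]
  map_mul' := fun x y => phi_add p q r x.toAdd y.toAdd

open Complex in
lemma freq_eq (u v : ℝ)
    (h : ∀ x : ℝ, Complex.exp (2*(π:ℂ)*I*((u:ℂ)*(x:ℂ)))
      = Complex.exp (2*(π:ℂ)*I*((v:ℂ)*(x:ℂ)))) : u = v := by
  by_contra hne
  have hd : (u:ℂ) - (v:ℂ) ≠ 0 := by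
    simpa [sub_eq_zero] using fun hh => hne (by exact_mod_cast hh)
  set x0 : ℝ := 1/(2*(u-v)) with hx0
  have key : Complex.exp (2*(π:ℂ)*I*((u:ℂ)*(x0:ℂ)) - 2*(π:ℂ)*I*((v:ℂ)*(x0:ℂ))) = 1 := by
    rw [Complex.exp_sub, h x0, div_self (Complex.exp_ne_zero _)]
  have harg : 2*(π:ℂ)*I*((u:ℂ)*(x0:ℂ)) - 2*(π:ℂ)*I*((v:ℂ)*(x0:ℂ)) = (π:ℂ)*I := by
    rw [hx0]
    push_cast
    field_simp
  rw [harg, Complex.exp_pi_mul_I] at key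
  norm_num at key

lemma phi_inj {p q r p' q' r' : ℝ} (h : phi p q r = phi p' q' r') :
    p = p' ∧ q = q' ∧ r = r' := by
  refine ⟨freq_eq _ _ fun x => ?_, freq_eq _ _ fun x => ?_, freq_eq _ _ fun x => ?_⟩
  · simpa [phi] using congrFun h (x, 0, 0)
  · simpa [phi] using congrFun h (0, x, 0)
  · simpa [phi] using congrFun h (0, 0, x)

set_option maxHeartbeats 1000000 in
lemma phi_linearIndependent {ι : Type*} (v : ι → R3) (hv : Function.Injective v) :
    LinearIndependent ℂ (fun i => phi (v i).1 (v i).2.1 (v i).2.2) := by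
  have h1 : Function.Injective (fun i => toHom (v i).1 (v i).2.1 (v i).2.2) := by
    intro i j hij
    have h2 := congrArg (fun (F : Multiplicative R3 →* ℂ) => (F : Multiplicative R3 → ℂ)) hij
    have h3 : phi (v i).1 (v i).2.1 (v i).2.2 = phi (v j).1 (v j).2.1 (v j).2.2 := h2
    obtain ⟨e1, e2, e3⟩ := phi_inj h3
    exact hv (by ext <;> assumption)
  have key := (linearIndependent_monoidHom (Multiplicative R3) ℂ).comp _ h1
  have h4 : (fun i => phi (v i).1 (v i).2.1 (v i).2.2)
      = (fun f : Multiplicative R3 →* ℂ => (f : Multiplicative R3 → ℂ))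
        ∘ (fun i => toHom (v i).1 (v i).2.1 (v i).2.2) := rfl
  rw [h4]
  exact key

def sg : Bool → ℝ := fun e => if e then 1 else -1

lemma sg_abs (e : Bool) : |sg e| = 1 := by cases e <;> simp [sg]

lemma sg_cancel {t : ℝ} (ht : t ≠ 0) {e e' : Bool} (h : sg e * t = sg e' * t) : e = e' := by
  cases e <;> cases e' <;> first
  | rfl
  | (exfalso; simp [sg] at h; apply ht; linarith)

def fr (A B c : ℝ) : Bool × Bool × Bool × Bool → R3 := fun i =>
  (sg i.2.1 * (if i.1 then B else A), sg i.2.2.1 * (if i.1 then A else B), sg i.2.2.2 * c)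

noncomputable def FF (A B c : ℝ) : Bool × Bool × Bool × Bool → FunSp := fun i =>
  phi (fr A B c i).1 (fr A B c i).2.1 (fr A B c i).2.2

lemma fr_inj {A B c : ℝ} (hA : A ≠ 0) (hB : B ≠ 0) (hAB : |A| ≠ |B|) (hc : c ≠ 0) :
    Function.Injective (fr A B c) := by
  rintro ⟨w, x, y, z⟩ ⟨w', x', y', z'⟩ hij
  have h1 := congrArg Prod.fst hij
  have h2 := congrArg (fun v => v.2.1) hij
  have h3 := congrArg (fun v => v.2.2) hij
  simp only [fr] at h1 h2 h3
  have hz : z = z' := sg_cancel hc h3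
  have hw : w = w' := by
    cases w <;> cases w' <;> first
    | rfl
    | (exfalso
       have habs := congrArg abs h1
       rw [abs_mul, abs_mul, sg_abs, sg_abs, one_mul, one_mul] at habs
       simp only [if_true, if_false] at habs
       first | exact hAB habs | exact hAB habs.symm)
  subst hw
  have hx : x = x' := by
    cases w
    · exact sg_cancel hA (by simpa using h1)
    · exact sg_cancel hB (by simpa using h1)
  have hy : y = y' := by
    cases w
    · exact sg_cancel hB (by simpa using h2)
    · exact sg_cancel hA (by simpa using h2)
  simp [hx, hy, hz]

lemma FF_linearIndependent {A B c : ℝ} (hA : A ≠ 0) (hB : B ≠ 0)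
    (hAB : |A| ≠ |B|) (hc : c ≠ 0) : LinearIndependent ℂ (FF A B c) :=
  phi_linearIndependent (fr A B c) (fr_inj hA hB hAB hc)


lemma abs_lemma {ι κ : Type} [Fintype ι] [Fintype κ] [DecidableEq ι] [DecidableEq κ]
    (F : ι → FunSp) (hF : LinearIndependent ℂ F)
    (σ : FunSp →ₗ[ℂ] FunSp)
    (pr : ι → κ) (sec : κ → ι) (hsec : ∀ k, pr (sec k) = k)
    (E : ι → ℂ) (hE : ∀ k, E (sec k) ≠ 0)
    (cc : ι → ℂ) (hcc : ∀ i, cc i ≠ 0)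
    (hσ : ∀ i, σ (F i) = cc i • ∑ j, (if pr j = pr i then E j else 0) • F j) :
    Module.finrank ℂ ↥(Submodule.map σ (Submodule.span ℂ (Set.range F)))
      = Fintype.card κ := by
  set G : κ → FunSp := fun k => ∑ j, (if pr j = k then E j else 0) • F j with hG
  have hσ' : ∀ i, σ (F i) = cc i • G (pr i) := hσ
  have h1 : Submodule.map σ (Submodule.span ℂ (Set.range F))
      = Submodule.span ℂ (Set.range G) := by
    rw [Submodule.map_span, ← Set.range_comp]
    apply le_antisymm
    · rw [Submodule.span_le]
      rintro f ⟨i, rfl⟩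
      have : (σ ∘ F) i = cc i • G (pr i) := hσ' i
      rw [this]
      exact Submodule.smul_mem _ _ (Submodule.subset_span ⟨pr i, rfl⟩)
    · rw [Submodule.span_le]
      rintro f ⟨k, rfl⟩
      have h2 : σ (F (sec k)) = cc (sec k) • G k := by rw [hσ' (sec k), hsec]
      have h3 : G k = (cc (sec k))⁻¹ • σ (F (sec k)) := by
        rw [h2, smul_smul, inv_mul_cancel₀ (hcc _), one_smul]
      rw [h3]
      exact Submodule.smul_mem _ _ (Submodule.subset_span ⟨sec k, rfl⟩)
  rw [h1]
  have hGind : LinearIndependent ℂ G := by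
    rw [Fintype.linearIndependent_iff]
    intro g hg k
    have expand : ∑ k', g k' • G k' = ∑ j, (g (pr j) * E j) • F j := by
      rw [hG]
      simp only [Finset.smul_sum]
      rw [Finset.sum_comm]
      refine Finset.sum_congr rfl fun j _ => ?_
      simp only [smul_smul, mul_ite, mul_zero, ite_smul, zero_smul]
      simp [smul_smul]
    rw [expand] at hg
    have h5 := Fintype.linearIndependent_iff.mp hF _ hg (sec k)
    rw [hsec] at h5
    exact (mul_eq_zero.mp h5).resolve_right (hE k)
  rw [finrank_span_eq_card hGind]


def piT : Bool × Bool × Bool × Bool → Bool × Bool :=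
  fun i => ((i.2.1 == i.2.2.1) != i.1, i.2.2.2)

def secT : Bool × Bool → Bool × Bool × Bool × Bool := fun k => (false, true, k.1, k.2)

open Complex in
noncomputable def zt (c : ℝ) (z : Bool) : ℂ :=
  Complex.exp ((π:ℂ) * I * ((if z then c else -c : ℝ) : ℂ))

noncomputable def ccT (c : ℝ) : Bool × Bool × Bool × Bool → ℂ := fun i =>
  (zt c i.2.2.2) ^ (if i.1 then (if i.2.2.1 then 1 else 3) else (if i.2.1 then 0 else 2))

noncomputable def ET (c : ℝ) : Bool × Bool × Bool × Bool → ℂ := fun i =>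
  (4:ℂ)⁻¹ * (zt c i.2.2.2) ^ (if i.1 then (if i.2.2.1 then 3 else 1) else (if i.2.1 then 0 else 2))

open Complex in
lemma keyT (A B c : ℝ) (h4p : Complex.exp ((π:ℂ)*I*(c:ℝ))^4 = 1)
    (h4m : Complex.exp ((π:ℂ)*I*((-c : ℝ):ℂ))^4 = 1) (i : Bool × Bool × Bool × Bool) :
    sigmaT (FF A B c i) = ccT c i • sigmaT (FF A B c (secT (piT i))) := by
  obtain ⟨w, x, y, z⟩ := i
  cases w <;> cases x <;> cases y <;> cases z <;>
    simp [FF, fr, sg, piT, secT, ccT, zt] <;>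
    first
    | rfl
    | (rw [masterT1 _ _ _ h4p]; (try simp only [Complex.ofReal_neg, mul_neg, neg_neg, pow_one]); all_goals rfl)
    | (rw [masterT1 _ _ _ h4m]; (try simp only [Complex.ofReal_neg, mul_neg, neg_neg, pow_one]); all_goals rfl)
    | (rw [masterT2 _ _ _ h4p]; (try simp only [Complex.ofReal_neg, mul_neg, neg_neg, pow_one]); all_goals rfl)
    | (rw [masterT2 _ _ _ h4m]; (try simp only [Complex.ofReal_neg, mul_neg, neg_neg, pow_one]); all_goals rfl)
    | (rw [masterT2' _ _ _ h4p]; (try simp only [Complex.ofReal_neg, mul_neg, neg_neg, pow_one]); all_goals rfl)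
    | (rw [masterT2' _ _ _ h4m]; (try simp only [Complex.ofReal_neg, mul_neg, neg_neg, pow_one]); all_goals rfl)
    | (rw [masterT3' _ _ _ h4p]; (try simp only [Complex.ofReal_neg, mul_neg, neg_neg, pow_one]); all_goals rfl)
    | (rw [masterT3' _ _ _ h4m]; (try simp only [Complex.ofReal_neg, mul_neg, neg_neg, pow_one]); all_goals rfl)

open Complex in
lemma expandT (A B c : ℝ) (k : Bool × Bool) :
    sigmaT (FF A B c (secT k))
      = ∑ j, (if piT j = k then ET c j else 0) • FF A B c j := by
  obtain ⟨l, m⟩ := k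
  cases l <;> cases m <;>
    (simp [Fintype.sum_prod_type, Fintype.sum_bool, piT, secT, ET, zt, FF, fr, sg]
     rw [sigmaT_phi]
     try simp only [Complex.ofReal_neg, mul_neg, neg_neg]
     match_scalars <;> ring1)


def piD : Bool × Bool × Bool × Bool → Bool × Bool :=
  fun i => (i.1, i.2.1 == (i.2.2.1 == i.2.2.2))

def secD : Bool × Bool → Bool × Bool × Bool × Bool := fun k => (k.1, true, true, k.2)

open Complex in
noncomputable def PU (t : ℝ) : ℂ := Complex.exp ((π:ℂ) * I * (t:ℂ))

open Complex in
noncomputable def R2 (c : ℝ) (z : Bool) : ℂ :=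
  Complex.exp (2 * (π:ℂ) * I * ((if z then c else -c : ℝ) : ℂ))

noncomputable def ccD (A B c : ℝ) : Bool × Bool × Bool × Bool → ℂ := fun i =>
  if i.2.1 then (if i.2.2.1 then 1 else PU (if i.1 then B else A))
  else (if i.2.2.1 then PU (if i.1 then A else B) * R2 c i.2.2.2
        else PU (if i.1 then B else A) * PU (if i.1 then A else B) * R2 c i.2.2.2)

noncomputable def ED (A B c : ℝ) : Bool × Bool × Bool × Bool → ℂ := fun i =>
  if i.2.1 then (if i.2.2.1 then (4:ℂ)⁻¹ else (4:ℂ)⁻¹ * PU (if i.1 then B else A))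
  else (if i.2.2.1 then (4:ℂ)⁻¹ * (PU (if i.1 then A else B) * R2 c (!i.2.2.2))
        else (4:ℂ)⁻¹ * (PU (if i.1 then B else A) * PU (if i.1 then A else B) * R2 c i.2.2.2))

open Complex in
lemma keyD (A B c : ℝ)
    (hA2 : Complex.exp ((π:ℂ)*I*(A:ℂ)) * Complex.exp ((π:ℂ)*I*(A:ℂ)) = 1)
    (hB2 : Complex.exp ((π:ℂ)*I*(B:ℂ)) * Complex.exp ((π:ℂ)*I*(B:ℂ)) = 1)
    (hRp : Complex.exp (2*(π:ℂ)*I*(c:ℂ)) * Complex.exp (2*(π:ℂ)*I*(c:ℂ)) = 1)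
    (hRm : Complex.exp (2*(π:ℂ)*I*((-c:ℝ):ℂ)) * Complex.exp (2*(π:ℂ)*I*((-c:ℝ):ℂ)) = 1)
    (i : Bool × Bool × Bool × Bool) :
    sigmaD (FF A B c i) = ccD A B c i • sigmaD (FF A B c (secD (piD i))) := by
  obtain ⟨w, x, y, z⟩ := i
  cases w <;> cases x <;> cases y <;> cases z <;>
    simp [FF, fr, sg, piD, secD, ccD, PU, R2] <;>
    first
    | rfl
    | (rw [masterD1 _ _ _ hA2 hB2 hRp]; (try simp only [Complex.ofReal_neg, mul_neg, neg_neg, pow_one]); all_goals rfl)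
    | (rw [masterD1 _ _ _ hA2 hB2 hRm]; (try simp only [Complex.ofReal_neg, mul_neg, neg_neg, pow_one]); all_goals rfl)
    | (rw [masterD1 _ _ _ hB2 hA2 hRp]; (try simp only [Complex.ofReal_neg, mul_neg, neg_neg, pow_one]); all_goals rfl)
    | (rw [masterD1 _ _ _ hB2 hA2 hRm]; (try simp only [Complex.ofReal_neg, mul_neg, neg_neg, pow_one]); all_goals rfl)
    | (rw [masterD2 _ _ _ hA2 hB2 hRp]; (try simp only [Complex.ofReal_neg, mul_neg, neg_neg, pow_one]); all_goals rfl)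
    | (rw [masterD2 _ _ _ hA2 hB2 hRm]; (try simp only [Complex.ofReal_neg, mul_neg, neg_neg, pow_one]); all_goals rfl)
    | (rw [masterD2 _ _ _ hB2 hA2 hRp]; (try simp only [Complex.ofReal_neg, mul_neg, neg_neg, pow_one]); all_goals rfl)
    | (rw [masterD2 _ _ _ hB2 hA2 hRm]; (try simp only [Complex.ofReal_neg, mul_neg, neg_neg, pow_one]); all_goals rfl)
    | (rw [masterD3 _ _ _ hA2 hB2 hRp]; (try simp only [Complex.ofReal_neg, mul_neg, neg_neg, pow_one]); all_goals rfl)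
    | (rw [masterD3 _ _ _ hA2 hB2 hRm]; (try simp only [Complex.ofReal_neg, mul_neg, neg_neg, pow_one]); all_goals rfl)
    | (rw [masterD3 _ _ _ hB2 hA2 hRp]; (try simp only [Complex.ofReal_neg, mul_neg, neg_neg, pow_one]); all_goals rfl)
    | (rw [masterD3 _ _ _ hB2 hA2 hRm]; (try simp only [Complex.ofReal_neg, mul_neg, neg_neg, pow_one]); all_goals rfl)

open Complex in
lemma expandD (A B c : ℝ) (k : Bool × Bool) :
    sigmaD (FF A B c (secD k))
      = ∑ j, (if piD j = k then ED A B c j else 0) • FF A B c j := by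
  obtain ⟨l, m⟩ := k
  cases l <;> cases m <;>
    (simp [Fintype.sum_prod_type, Fintype.sum_bool, piD, secD, ED, PU, R2, FF, fr, sg]
     rw [sigmaD_phi]
     try simp only [Complex.ofReal_neg, mul_neg, neg_neg]
     match_scalars <;> ring1)


lemma sg_sel {s : ℝ} (hs : s = 1 ∨ s = -1) : sg (decide (s = 1)) = s := by
  rcases hs with rfl | rfl
  · simp [sg]
  · have h : ¬((-1:ℝ) = 1) := by norm_num
    simp [sg, h]

lemma Vspace_eq (A B c : ℝ) :
    Vspace A B c = Submodule.span ℂ (Set.range (FF A B c)) := by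
  unfold Vspace
  congr 1
  ext f
  simp only [Set.mem_setOf_eq, Set.mem_range, Set.mem_insert_iff, Set.mem_singleton_iff]
  constructor
  · rintro ⟨s₁, s₂, s₃, hs₁, hs₂, hs₃, (rfl | rfl)⟩
    · exact ⟨(false, if s₁ = 1 then true else false, if s₂ = 1 then true else false,
        if s₃ = 1 then true else false),
        by simp [FF, fr, sg_sel hs₁, sg_sel hs₂, sg_sel hs₃]⟩
    · exact ⟨(true, if s₁ = 1 then true else false, if s₂ = 1 then true else false,
        if s₃ = 1 then true else false),
        by simp [FF, fr, sg_sel hs₁, sg_sel hs₂, sg_sel hs₃]⟩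
  · rintro ⟨⟨w, x, y, z⟩, rfl⟩
    refine ⟨sg x, sg y, sg z, ?_, ?_, ?_, ?_⟩
    · cases x <;> simp [sg]
    · cases y <;> simp [sg]
    · cases z <;> simp [sg]
    · cases w
      · left; simp [FF, fr]
      · right; simp [FF, fr]


end

/-- for nonzero integers `a, b` with `|a| ≠ |b|` and a nonzero half-integer
`c`, the space `V_{a,b,c}` is 16-dimensional and both images `σ^T(V_{a,b,c})` and
`σ^D(V_{a,b,c})` are 4-dimensional. -/
theorem generic_dims
    (a b : ℤ) (ha : a ≠ 0) (hb : b ≠ 0) (hab : |a| ≠ |b|)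
    (c : ℝ) (hc : ∃ k : ℤ, c = (k : ℝ) / 2) (hc0 : c ≠ 0) :
    Module.finrank ℂ ↥(Vspace (a : ℝ) (b : ℝ) c) = 16 ∧
    Module.finrank ℂ ↥(Submodule.map sigmaT (Vspace (a : ℝ) (b : ℝ) c)) = 4 ∧
    Module.finrank ℂ ↥(Submodule.map sigmaD (Vspace (a : ℝ) (b : ℝ) c)) = 4 := by
  obtain ⟨k, hk⟩ := hc
  have hA : (a:ℝ) ≠ 0 := Int.cast_ne_zero.mpr ha
  have hB : (b:ℝ) ≠ 0 := Int.cast_ne_zero.mpr hb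
  have hAB : |(a:ℝ)| ≠ |(b:ℝ)| := fun h => hab (by exact_mod_cast h)
  have hFF := FF_linearIndependent hA hB hAB hc0
  have hA2 : Complex.exp ((Real.pi:ℂ)*Complex.I*((a:ℝ):ℂ)) * Complex.exp ((Real.pi:ℂ)*Complex.I*((a:ℝ):ℂ)) = 1 := by
    rw [← Complex.exp_add]
    apply exp_eq_one_int _ a
    push_cast
    ring
  have hB2 : Complex.exp ((Real.pi:ℂ)*Complex.I*((b:ℝ):ℂ)) * Complex.exp ((Real.pi:ℂ)*Complex.I*((b:ℝ):ℂ)) = 1 := by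
    rw [← Complex.exp_add]
    apply exp_eq_one_int _ b
    push_cast
    ring
  have hRp : Complex.exp (2*(Real.pi:ℂ)*Complex.I*(c:ℂ)) * Complex.exp (2*(Real.pi:ℂ)*Complex.I*(c:ℂ)) = 1 := by
    rw [← Complex.exp_add]
    apply exp_eq_one_int _ k
    rw [hk]
    push_cast
    ring
  have hRm : Complex.exp (2*(Real.pi:ℂ)*Complex.I*((-c:ℝ):ℂ)) * Complex.exp (2*(Real.pi:ℂ)*Complex.I*((-c:ℝ):ℂ)) = 1 := by
    rw [← Complex.exp_add]
    apply exp_eq_one_int _ (-k)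
    rw [hk]
    push_cast
    ring
  have h4p : Complex.exp ((Real.pi:ℂ)*Complex.I*(c:ℝ))^4 = 1 := by
    rw [← Complex.exp_nat_mul]
    apply exp_eq_one_int _ k
    rw [hk]
    push_cast
    ring
  have h4m : Complex.exp ((Real.pi:ℂ)*Complex.I*((-c:ℝ):ℂ))^4 = 1 := by
    rw [← Complex.exp_nat_mul]
    apply exp_eq_one_int _ (-k)
    rw [hk]
    push_cast
    ring
  have hsecT : ∀ kk, piT (secT kk) = kk := by decide
  have hsecD : ∀ kk, piD (secD kk) = kk := by decide
  have hET : ∀ kk, ET c (secT kk) ≠ 0 := by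
    rintro ⟨l, m⟩
    norm_num [ET, secT]
  have hED : ∀ kk, ED (a:ℝ) (b:ℝ) c (secD kk) ≠ 0 := by
    rintro ⟨l, m⟩
    norm_num [ED, secD]
  have hccT : ∀ i, ccT c i ≠ 0 := by
    rintro ⟨w, x, y, z⟩
    simp only [ccT]
    apply pow_ne_zero
    unfold zt
    exact Complex.exp_ne_zero _
  have hccD : ∀ i, ccD (a:ℝ) (b:ℝ) c i ≠ 0 := by
    rintro ⟨w, x, y, z⟩
    simp only [ccD, PU, R2]
    split_ifs <;>
      first
      | exact one_ne_zero
      | exact Complex.exp_ne_zero _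
      | exact mul_ne_zero (Complex.exp_ne_zero _) (Complex.exp_ne_zero _)
      | exact mul_ne_zero (mul_ne_zero (Complex.exp_ne_zero _) (Complex.exp_ne_zero _))
          (Complex.exp_ne_zero _)
  refine ⟨?_, ?_, ?_⟩
  · rw [Vspace_eq, finrank_span_eq_card hFF]
    decide
  · rw [Vspace_eq,
      abs_lemma _ hFF sigmaT piT secT hsecT (ET c) hET (ccT c) hccT
        (fun i => by rw [keyT (a:ℝ) (b:ℝ) c h4p h4m i, expandT])]
    decide
  · rw [Vspace_eq,
      abs_lemma _ hFF sigmaD piD secD hsecD (ED (a:ℝ) (b:ℝ) c) hED (ccD (a:ℝ) (b:ℝ) c) hccD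
        (fun i => by rw [keyD (a:ℝ) (b:ℝ) c hA2 hB2 hRp hRm i, expandD])]
    decide
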